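/- arXiv:2006.13059 — 6 statements merged into one kernel-verified Lean document; each statement's English description precedes it below -/
import Mathlib

section
/- Let V be a finite-dimensional complex vector space, g : V × V → ℂ a nondegenerate bilinear form, and I, J, K ∈ End(V) satisfying the quaternion relations, with g K-invariant. Then the kernel of Ω₊ in its second argument, {w ∈ V : Ω₊(v,w) = 0 for all v ∈ V}, equals the (-i)-eigenspace {w : I(w) = -i·w}, and the kernel of Ω₋ in its second argument equals the (+i)-eigenspace {w : I(w) = i·w}. -/
/-- For a finite-dimensional complex vector space with a nondegenerate bilinear
form `g` and endomorphisms `I, J, K` satisfying the quaternion relations, with `g` K-invariant,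
the kernel of `Ω₊` in its second argument equals the `(-i)`-eigenspace of `I`, and the kernel
of `Ω₋` in its second argument equals the `(+i)`-eigenspace of `I`. -/
theorem stmt_4 (V : Type*) [AddCommGroup V] [Module ℂ V] [FiniteDimensional ℂ V]
    (g : V →ₗ[ℂ] V →ₗ[ℂ] ℂ) (I J K : V →ₗ[ℂ] V)
    (hII : I ∘ₗ I = -LinearMap.id) (hJJ : J ∘ₗ J = -LinearMap.id)
    (hKK : K ∘ₗ K = -LinearMap.id) (hIJK : I ∘ₗ (J ∘ₗ K) = -LinearMap.id)
    (hnd : ∀ v, (∀ w, g v w = 0) → v = 0)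
    (hKinv : ∀ v w, g (K v) (K w) = g v w) :
    {w : V | ∀ v, g v (J w + Complex.I • K w) = 0} = {w : V | I w = -(Complex.I • w)} ∧
    {w : V | ∀ v, g v (J w - Complex.I • K w) = 0} = {w : V | I w = Complex.I • w} := by
  -- right nondegeneracy
  have hndR : ∀ w, (∀ v, g v w = 0) → w = 0 := by
    exact fun w hw => (LinearMap.BilinForm.Nondegenerate.ofSeparatingLeft (B := g) hnd).2 w hw
  -- J ∘ K = I
  have hJK : ∀ w, J (K w) = I w := by
    intro w
    have h1 : I (J (K w)) = -w := by
      have := congrArg (fun f => f w) hIJK; simpa using this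
    have h2 : I (I (J (K w))) = -(J (K w)) := by
      have := congrArg (fun f => f (J (K w))) hII; simpa using this
    rw [h1, map_neg] at h2
    exact (neg_inj.mp h2).symm
  -- J ∘ I = -K
  have hJI : ∀ w, J (I w) = -K w := by
    intro w
    rw [← hJK]
    have := congrArg (fun f => f (K w)) hJJ; simpa using this
  -- J ∘ J = -1 pointwise
  have hJJ' : ∀ w, J (J w) = -w := by
    intro w; have := congrArg (fun f => f w) hJJ; simpa using this
  constructor
  · ext w
    simp only [Set.mem_setOf_eq]
    constructor
    · intro h
      have h0 : J w + Complex.I • K w = 0 := hndR _ fun v => h v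
      have h1 : J w = -(Complex.I • K w) := by linear_combination (norm := module) h0
      have h2 : J (J w) = -(Complex.I • J (K w)) := by rw [h1, map_neg, map_smul]
      rw [hJJ', hJK] at h2
      have h3 : w = Complex.I • I w := by
        have := congrArg Neg.neg h2; simpa using this
      have h4 := congrArg (fun x => Complex.I • x) h3
      simp only [smul_smul, Complex.I_mul_I, neg_smul, one_smul] at h4
      linear_combination (norm := module) h4
    · intro h v
      have h2 : J (I w) = -K w := hJI w
      rw [h] at h2
      have h3 : J w = -(Complex.I • K w) := by
        have := congrArg (fun x => Complex.I • x) h2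
        simp only [map_neg, map_smul, smul_neg, smul_smul, Complex.I_mul_I, neg_smul,
          one_smul, neg_neg] at this
        linear_combination (norm := module) this
      rw [h3]
      simp
  · ext w
    simp only [Set.mem_setOf_eq]
    constructor
    · intro h
      have h0 : J w - Complex.I • K w = 0 := hndR _ fun v => h v
      have h1 : J w = Complex.I • K w := by linear_combination (norm := module) h0
      have h2 : J (J w) = Complex.I • J (K w) := by rw [h1, map_smul]
      rw [hJJ', hJK] at h2
      have := congrArg (fun x => Complex.I • x) h2
      simpa [smul_smul, Complex.I_mul_I, neg_smul] using this.symm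
    · intro h v
      have h2 : J (I w) = -K w := hJI w
      rw [h] at h2
      have h3 : J w = Complex.I • K w := by
        have := congrArg (fun x => Complex.I • x) h2
        simp only [map_smul, smul_neg, smul_smul, Complex.I_mul_I, neg_smul,
          one_smul, neg_neg] at this
        exact neg_inj.mp this
      rw [h3]
      simp
end

section
/- In the standard model with skew-symmetric ω, the forms Ω₊ and Ω₋ are given explicitly by Ω₋((a,b),(a',b')) = 2·Σ_{i,j} ω_{i j}·b_i·b'_j and Ω₊((a,b),(a',b')) = 2·Σ_{i,j} ω_{i j}·a_i·a'_j. In particular, Ω₋((a,b),(a',b')) depends only on the second (base) components b, b' and vanishes whenever either argument is vertical (of the form (a, 0)), while Ω₊ depends only on the first (vertical) components a, a'. -/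
/-- In the standard model with skew-symmetric `ω`, the forms
`Ω₋(x,y) = g(x, J(y) - i·K(y))` and `Ω₊(x,y) = g(x, J(y) + i·K(y))` are given explicitly by
`Ω₋((a,b),(a',b')) = 2·Σ ω i j · b i · b' j` and `Ω₊((a,b),(a',b')) = 2·Σ ω i j · a i · a' j`.
In particular `Ω₋` depends only on the second (base) components and vanishes if either argument
is vertical (of the form `(a, 0)`), while `Ω₊` depends only on the first (vertical) components. -/
theorem stmt_9 (n : ℕ) (hn : 1 ≤ n) (ω : Matrix (Fin n) (Fin n) ℂ)
    (hskew : ∀ i j, ω i j = -ω j i)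
    (g : ((Fin n → ℂ) × (Fin n → ℂ)) → ((Fin n → ℂ) × (Fin n → ℂ)) → ℂ)
    (hg : ∀ x y, g x y = ∑ i, ∑ j, ω i j * (x.1 i * y.2 j - x.2 i * y.1 j))
    (I J K : ((Fin n → ℂ) × (Fin n → ℂ)) → ((Fin n → ℂ) × (Fin n → ℂ)))
    (hI : ∀ p, I p = (fun i => Complex.I * p.1 i, fun i => -Complex.I * p.2 i))
    (hJ : ∀ p, J p = (-p.2, p.1))
    (hK : ∀ p, K p = (fun i => -Complex.I * p.2 i, fun i => -Complex.I * p.1 i)) :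
    (∀ x y, g x (J y - Complex.I • K y) = 2 * ∑ i, ∑ j, ω i j * x.2 i * y.2 j) ∧
    (∀ x y, g x (J y + Complex.I • K y) = 2 * ∑ i, ∑ j, ω i j * x.1 i * y.1 j) ∧
    (∀ x x' y y' : (Fin n → ℂ) × (Fin n → ℂ), x.2 = x'.2 → y.2 = y'.2 →
      g x (J y - Complex.I • K y) = g x' (J y' - Complex.I • K y')) ∧
    (∀ (a : Fin n → ℂ) (y : (Fin n → ℂ) × (Fin n → ℂ)),
      g (a, 0) (J y - Complex.I • K y) = 0 ∧ g y (J (a, 0) - Complex.I • K (a, 0)) = 0) ∧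
    (∀ x x' y y' : (Fin n → ℂ) × (Fin n → ℂ), x.1 = x'.1 → y.1 = y'.1 →
      g x (J y + Complex.I • K y) = g x' (J y' + Complex.I • K y')) := by
  have hminus : ∀ x y : (Fin n → ℂ) × (Fin n → ℂ),
      g x (J y - Complex.I • K y) = 2 * ∑ i, ∑ j, ω i j * x.2 i * y.2 j := by
    intro x y
    rw [hg, hJ, hK]
    simp only [Prod.smul_fst, Prod.smul_snd, Prod.fst_sub, Prod.snd_sub, Pi.sub_apply,
      Pi.smul_apply, smul_eq_mul, Pi.neg_apply]
    rw [Finset.mul_sum]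
    refine Finset.sum_congr rfl fun i _ => ?_
    rw [Finset.mul_sum]
    refine Finset.sum_congr rfl fun j _ => ?_
    have := Complex.I_mul_I
    ring_nf
    simp [Complex.I_sq]
    ring
  have hplus : ∀ x y : (Fin n → ℂ) × (Fin n → ℂ),
      g x (J y + Complex.I • K y) = 2 * ∑ i, ∑ j, ω i j * x.1 i * y.1 j := by
    intro x y
    rw [hg, hJ, hK]
    simp only [Prod.smul_fst, Prod.smul_snd, Prod.fst_add, Prod.snd_add, Pi.add_apply,
      Pi.smul_apply, smul_eq_mul, Pi.neg_apply]
    rw [Finset.mul_sum]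
    refine Finset.sum_congr rfl fun i _ => ?_
    rw [Finset.mul_sum]
    refine Finset.sum_congr rfl fun j _ => ?_
    ring_nf
    simp [Complex.I_sq]
    ring
  refine ⟨hminus, hplus, fun x x' y y' h2 h2' => by rw [hminus, hminus, h2, h2'],
    fun a y => ⟨?_, ?_⟩, fun x x' y y' h1 h1' => by rw [hplus, hplus, h1, h1']⟩
  · rw [hminus]; simp
  · rw [hminus]; simp
end

section
/- Let η ∈ Matrix (Fin n) (Fin n) ℂ and let W : (Fin n → ℂ) × (Fin n → ℂ) → ℂ be infinitely ℂ-differentiable. Assume: (i) W is odd in θ, i.e. W(z, -θ) = -W(z, θ) for all z, θ; and (ii) for all i, j, k, the function ∂_{θ_k}[ ∂_{θ_i}∂_{z_j}W - ∂_{θ_j}∂_{z_i}W - Σ_{p,q} η_{p q}·(∂_{θ_i}∂_{θ_p}W)·(∂_{θ_j}∂_{θ_q}W) ] vanishes identically. Define W'(z, θ) = W(z, θ) - Σ_k θ_k·(∂_{θ_k}W)(z, 0). Then W' satisfies Plebański's second heavenly equation (for η): ∂_{θ_i}∂_{z_j}W' - ∂_{θ_j}∂_{z_i}W' = Σ_{p,q}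 η_{p q}·(∂_{θ_i}∂_{θ_p}W')·(∂_{θ_j}∂_{θ_q}W') identically for all i, j. -/
open scoped BigOperators

section helpers
variable {n : ℕ}
local notation "E" => ((Fin n → ℂ) × (Fin n → ℂ))

/-- directional derivative of a smooth function is smooth -/
lemma contDiff_dapply (f : E → ℂ) (hf : ContDiff ℂ ⊤ f) (v : E) :
    ContDiff ℂ ⊤ (fun x => fderiv ℂ f x v) :=
  (hf.fderiv_right le_top).clm_apply contDiff_const

/-- symmetry of second derivative, in directional form -/
lemma dapply_comm (f : E → ℂ) (hf : ContDiff ℂ ⊤ f) (x u v : E) :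
    fderiv ℂ (fun y => fderiv ℂ f y u) x v = fderiv ℂ (fun y => fderiv ℂ f y v) x u := by
  have hd : DifferentiableAt ℂ (fderiv ℂ f) x :=
    ((hf.fderiv_right (m := 1) le_top).differentiable one_ne_zero).differentiableAt
  have key : ∀ w : E, fderiv ℂ (fun y => fderiv ℂ f y w) x
      = (fderiv ℂ (fderiv ℂ f) x).flip w := by
    intro w
    rw [fderiv_clm_apply hd (differentiableAt_const w)]
    simp
  rw [key u, key v]
  exact (hf.contDiffAt.isSymmSndFDerivAt le_top) v u

lemma single_sum_lemma (v : Fin n → ℂ) :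
    (((0 : Fin n → ℂ), v) : E) = ∑ k, v k • (((0 : Fin n → ℂ), Pi.single k (1:ℂ)) : E) := by
  have h2 : v = ∑ k, v k • (Pi.single k (1:ℂ) : Fin n → ℂ) := by
    funext m
    simp [Finset.sum_apply, Pi.single_apply]
  refine Prod.ext ?_ ?_ <;> simp [Prod.fst_sum, Prod.snd_sum, ← h2]

/-- a function all of whose θ-directional derivatives vanish is independent of θ -/
lemma eq_of_dtheta_zero (f : E → ℂ) (hf : Differentiable ℂ f)
    (h : ∀ (k : Fin n) (x : E), fderiv ℂ f x (0, Pi.single k 1) = 0)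
    (x : E) : f x = f (x.1, 0) := by
  have hmk : ∀ t : Fin n → ℂ, HasFDerivAt (fun t : Fin n → ℂ => ((x.1, t) : E))
      (((0 : (Fin n → ℂ) →L[ℂ] (Fin n → ℂ))).prod (ContinuousLinearMap.id ℂ (Fin n → ℂ))) t :=
    fun t => (hasFDerivAt_const x.1 t).prodMk (hasFDerivAt_id t)
  have hg : ∀ t, HasFDerivAt (fun t : Fin n → ℂ => f (x.1, t))
      ((fderiv ℂ f (x.1, t)).comp
        (((0 : (Fin n → ℂ) →L[ℂ] (Fin n → ℂ))).prod (ContinuousLinearMap.id ℂ (Fin n → ℂ)))) t :=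
    fun t => ((hf (x.1, t)).hasFDerivAt).comp t (hmk t)
  have hgd : Differentiable ℂ (fun t : Fin n → ℂ => f (x.1, t)) :=
    fun t => (hg t).differentiableAt
  have hg' : ∀ t, fderiv ℂ (fun t : Fin n → ℂ => f (x.1, t)) t = 0 := by
    intro t
    rw [(hg t).fderiv]
    ext v
    simp only [ContinuousLinearMap.comp_apply, ContinuousLinearMap.prod_apply,
      ContinuousLinearMap.zero_apply, ContinuousLinearMap.coe_id', id_eq]
    rw [single_sum_lemma v, map_sum]
    simp only [map_smul, h, smul_zero, Finset.sum_const_zero]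
  exact is_const_of_fderiv_eq_zero hgd hg' x.2 0

/-- odd in θ implies second θ-derivatives vanish at θ = 0 -/
lemma dtheta_dtheta_zero (W : E → ℂ) (hW : ContDiff ℂ ⊤ W)
    (hodd : ∀ z θ, W (z, -θ) = -W (z, θ)) (i p : Fin n) (z : Fin n → ℂ) :
    fderiv ℂ (fun x => fderiv ℂ W x (0, Pi.single p 1)) ((z, 0) : E) (0, Pi.single i 1) = 0 := by
  set M : E →L[ℂ] E :=
    (ContinuousLinearMap.fst ℂ (Fin n → ℂ) (Fin n → ℂ)).prod
      (-(ContinuousLinearMap.snd ℂ (Fin n → ℂ) (Fin n → ℂ))) with hMdef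
  have hMx : ∀ x : E, M x = (x.1, -x.2) := fun x => rfl
  have hWd : Differentiable ℂ W := hW.differentiable (by simp)
  have hDW : ∀ x : E, (fderiv ℂ W (M x)).comp M = -(fderiv ℂ W x) := by
    intro x
    have h1 : HasFDerivAt (fun y => W (M y)) ((fderiv ℂ W (M x)).comp M) x :=
      ((hWd (M x)).hasFDerivAt).comp x (M.hasFDerivAt)
    have h2 : (fun y : E => W (M y)) = fun y : E => -W y := by
      funext y
      rw [hMx y]
      exact hodd y.1 y.2
    rw [h2] at h1
    exact h1.unique ((hWd x).hasFDerivAt.neg)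
  set G : E → ℂ := fun x => fderiv ℂ W x (0, Pi.single p 1) with hGdef
  have hGeven : ∀ x : E, G (M x) = G x := by
    intro x
    have h3 := congrFun (congrArg DFunLike.coe (hDW x)) (0, Pi.single p 1)
    simp only [ContinuousLinearMap.comp_apply, ContinuousLinearMap.neg_apply] at h3
    have hM1 : M ((0 : Fin n → ℂ), Pi.single p (1:ℂ)) = -((0 : Fin n → ℂ), Pi.single p (1:ℂ)) := by
      rw [hMx]; simp
    rw [hM1, map_neg] at h3
    exact neg_injective h3
  have hGc : ContDiff ℂ ⊤ G := contDiff_dapply W hW _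
  have hGd : Differentiable ℂ G := hGc.differentiable (by simp)
  have hDG : ∀ x : E, (fderiv ℂ G (M x)).comp M = fderiv ℂ G x := by
    intro x
    have h1 : HasFDerivAt (fun y => G (M y)) ((fderiv ℂ G (M x)).comp M) x :=
      ((hGd (M x)).hasFDerivAt).comp x (M.hasFDerivAt)
    have h2 : (fun y : E => G (M y)) = G := funext hGeven
    rw [h2] at h1
    exact h1.unique (hGd x).hasFDerivAt
  have hx0 : M ((z, 0) : E) = ((z, 0) : E) := by rw [hMx]; simp
  have h4 := congrFun (congrArg DFunLike.coe (hDG ((z, 0) : E))) (0, Pi.single i 1)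
  rw [hx0] at h4
  simp only [ContinuousLinearMap.comp_apply] at h4
  have hM2 : M ((0 : Fin n → ℂ), Pi.single i (1:ℂ)) = -((0 : Fin n → ℂ), Pi.single i (1:ℂ)) := by
    rw [hMx]; simp
  rw [hM2, map_neg] at h4
  linear_combination (-1/2 : ℂ) * h4

noncomputable def Jm (n : ℕ) : ((Fin n → ℂ) × (Fin n → ℂ)) →L[ℂ] ((Fin n → ℂ) × (Fin n → ℂ)) :=
  (ContinuousLinearMap.fst ℂ (Fin n → ℂ) (Fin n → ℂ)).prod 0

noncomputable def Pk (n : ℕ) (k : Fin n) : ((Fin n → ℂ) × (Fin n → ℂ)) →L[ℂ] ℂ :=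
  (ContinuousLinearMap.proj k).comp (ContinuousLinearMap.snd ℂ (Fin n → ℂ) (Fin n → ℂ))

lemma Jm_apply (x : E) : Jm n x = ((x.1, 0) : E) := rfl
lemma Pk_apply (k : Fin n) (x : E) : Pk n k x = x.2 k := rfl

lemma T_hasFDerivAt (φ : Fin n → E → ℂ) (hφ : ∀ k, Differentiable ℂ (φ k)) (x : E) :
    HasFDerivAt (fun y : E => ∑ k, y.2 k * φ k (y.1, 0))
      (∑ k, ((x.2 k) • ((fderiv ℂ (φ k) ((x.1, 0) : E)).comp (Jm n))
        + (φ k ((x.1, 0) : E)) • (Pk n k))) x := by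
  apply HasFDerivAt.fun_sum
  intro k _
  have hc : HasFDerivAt (fun y : E => y.2 k) (Pk n k) x := (Pk n k).hasFDerivAt
  have hJ : HasFDerivAt (fun y : E => ((y.1, 0) : E)) (Jm n) x := (Jm n).hasFDerivAt
  have hd : HasFDerivAt (fun y : E => φ k (y.1, 0))
      ((fderiv ℂ (φ k) ((x.1, 0) : E)).comp (Jm n)) x :=
    ((hφ k ((x.1, 0) : E)).hasFDerivAt).comp x hJ
  exact hc.mul hd

lemma T_dtheta (φ : Fin n → E → ℂ) (hφ : ∀ k, Differentiable ℂ (φ k)) (x : E) (i : Fin n) :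
    fderiv ℂ (fun y : E => ∑ k, y.2 k * φ k (y.1, 0)) x ((0, Pi.single i 1) : E)
      = φ i ((x.1, 0) : E) := by
  rw [(T_hasFDerivAt φ hφ x).fderiv]
  have hz : ∀ k : Fin n, (fderiv ℂ (φ k) ((x.1, 0) : E)).comp (Jm n) ((0, Pi.single i 1) : E)
      = 0 := by
    intro k
    have : Jm n ((0, Pi.single i 1) : E) = (0 : E) := by
      rw [Jm_apply]; simp [Prod.ext_iff]
    rw [ContinuousLinearMap.comp_apply, this, map_zero]
  simp only [ContinuousLinearMap.sum_apply, ContinuousLinearMap.add_apply,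
    ContinuousLinearMap.smul_apply, hz, smul_zero, zero_add, Pk_apply]
  simp [Pi.single_apply]

lemma T_dz (φ : Fin n → E → ℂ) (hφ : ∀ k, Differentiable ℂ (φ k)) (x : E) (j : Fin n) :
    fderiv ℂ (fun y : E => ∑ k, y.2 k * φ k (y.1, 0)) x ((Pi.single j 1, 0) : E)
      = ∑ k, x.2 k * fderiv ℂ (φ k) ((x.1, 0) : E) ((Pi.single j 1, 0) : E) := by
  rw [(T_hasFDerivAt φ hφ x).fderiv]
  have hJ : Jm n ((Pi.single j 1, 0) : E) = ((Pi.single j 1, 0) : E) := rfl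
  simp only [ContinuousLinearMap.sum_apply, ContinuousLinearMap.add_apply,
    ContinuousLinearMap.smul_apply, ContinuousLinearMap.comp_apply, hJ, Pk_apply,
    smul_eq_mul]
  simp

end helpers

/-- Directional derivative along the `i`-th coordinate of the first (`z`) factor. -/
noncomputable def dz {n : ℕ} (i : Fin n) (f : (Fin n → ℂ) × (Fin n → ℂ) → ℂ) :
    (Fin n → ℂ) × (Fin n → ℂ) → ℂ :=
  fun x => fderiv ℂ f x (Pi.single i 1, 0)

/-- Directional derivative along the `i`-th coordinate of the second (`θ`) factor. -/
noncomputable def dθ {n : ℕ} (i : Fin n) (f : (Fin n → ℂ) × (Fin n → ℂ) → ℂ) :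
    (Fin n → ℂ) × (Fin n → ℂ) → ℂ :=
  fun x => fderiv ℂ f x (0, Pi.single i 1)

/-- Plebański's second heavenly equation for the matrix `η`:
`∂_{θ_i}∂_{z_j}W - ∂_{θ_j}∂_{z_i}W = Σ_{p,q} η p q · (∂_{θ_i}∂_{θ_p}W)·(∂_{θ_j}∂_{θ_q}W)`. -/
def PlebanskiSecond {n : ℕ} (η : Matrix (Fin n) (Fin n) ℂ)
    (W : (Fin n → ℂ) × (Fin n → ℂ) → ℂ) : Prop :=
  ∀ i j x, dθ i (dz j W) x - dθ j (dz i W) x =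
    ∑ p, ∑ q, η p q * dθ i (dθ p W) x * dθ j (dθ q W) x

lemma dz_def {n : ℕ} (i : Fin n) (f : (Fin n → ℂ) × (Fin n → ℂ) → ℂ) :
    dz i f = fun x => fderiv ℂ f x (Pi.single i 1, 0) := rfl

lemma dθ_def {n : ℕ} (i : Fin n) (f : (Fin n → ℂ) × (Fin n → ℂ) → ℂ) :
    dθ i f = fun x => fderiv ℂ f x (0, Pi.single i 1) := rfl


/-- If `W` is smooth, odd in `θ`, and satisfies the "θ-derivative" version of the
heavenly equation (i.e. the left-hand side minus the right-hand side is annihilated by every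
`∂_{θ_k}`), then `W'(z,θ) = W(z,θ) - Σ_k θ_k·(∂_{θ_k}W)(z,0)` satisfies Plebański's second
heavenly equation itself. -/
theorem stmt_10 {n : ℕ} (η : Matrix (Fin n) (Fin n) ℂ)
    (W : (Fin n → ℂ) × (Fin n → ℂ) → ℂ)
    (hW : ContDiff ℂ ⊤ W)
    (hodd : ∀ z θ, W (z, -θ) = -W (z, θ))
    (heq : ∀ i j k x, dθ k (fun y => dθ i (dz j W) y - dθ j (dz i W) y -
        ∑ p, ∑ q, η p q * dθ i (dθ p W) y * dθ j (dθ q W) y) x = 0) :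
    PlebanskiSecond η (fun x => W x - ∑ k, x.2 k * dθ k W (x.1, 0)) := by
  intro i j x
  simp only [dθ_def, dz_def] at heq ⊢
  have hWd : Differentiable ℂ W := hW.differentiable (by simp)
  have hφd : ∀ k : Fin n,
      Differentiable ℂ (fun y : (Fin n → ℂ) × (Fin n → ℂ) => fderiv ℂ W y (0, Pi.single k 1)) :=
    fun k => (contDiff_dapply W hW _).differentiable (by simp)
  -- first θ-derivative of W'
  have h1 : ∀ (y : (Fin n → ℂ) × (Fin n → ℂ)) (p : Fin n),
      fderiv ℂ (fun y : (Fin n → ℂ) × (Fin n → ℂ) =>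
          W y - ∑ k, y.2 k * fderiv ℂ W (y.1, 0) (0, Pi.single k 1)) y (0, Pi.single p 1)
        = fderiv ℂ W y (0, Pi.single p 1) - fderiv ℂ W (y.1, 0) (0, Pi.single p 1) := by
    intro y p
    have hT := T_hasFDerivAt
      (fun k (w : (Fin n → ℂ) × (Fin n → ℂ)) => fderiv ℂ W w (0, Pi.single k 1)) hφd y
    rw [((hWd y).hasFDerivAt.fun_sub hT).fderiv, ContinuousLinearMap.sub_apply, ← hT.fderiv,
      T_dtheta _ hφd y p]
  -- first z-derivative of W'
  have h2 : ∀ (y : (Fin n → ℂ) × (Fin n → ℂ)) (q : Fin n),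
      fderiv ℂ (fun y : (Fin n → ℂ) × (Fin n → ℂ) =>
          W y - ∑ k, y.2 k * fderiv ℂ W (y.1, 0) (0, Pi.single k 1)) y (Pi.single q 1, 0)
        = fderiv ℂ W y (Pi.single q 1, 0)
          - ∑ k, y.2 k * fderiv ℂ (fun w : (Fin n → ℂ) × (Fin n → ℂ) =>
              fderiv ℂ W w (0, Pi.single k 1)) (y.1, 0) (Pi.single q 1, 0) := by
    intro y q
    have hT := T_hasFDerivAt
      (fun k (w : (Fin n → ℂ) × (Fin n → ℂ)) => fderiv ℂ W w (0, Pi.single k 1)) hφd y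
    rw [((hWd y).hasFDerivAt.fun_sub hT).fderiv, ContinuousLinearMap.sub_apply, ← hT.fderiv,
      T_dz _ hφd y q]
  -- second θθ-derivatives of W' agree with those of W
  have h3 : ∀ (p i' : Fin n),
      fderiv ℂ (fun y : (Fin n → ℂ) × (Fin n → ℂ) =>
          fderiv ℂ (fun x : (Fin n → ℂ) × (Fin n → ℂ) =>
            W x - ∑ k, x.2 k * fderiv ℂ W (x.1, 0) (0, Pi.single k 1)) y (0, Pi.single p 1))
          x (0, Pi.single i' 1)
        = fderiv ℂ (fun y : (Fin n → ℂ) × (Fin n → ℂ) =>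
            fderiv ℂ W y (0, Pi.single p 1)) x (0, Pi.single i' 1) := by
    intro p i'
    have hfun : (fun y : (Fin n → ℂ) × (Fin n → ℂ) =>
        fderiv ℂ (fun x : (Fin n → ℂ) × (Fin n → ℂ) =>
          W x - ∑ k, x.2 k * fderiv ℂ W (x.1, 0) (0, Pi.single k 1)) y (0, Pi.single p 1))
        = fun y : (Fin n → ℂ) × (Fin n → ℂ) =>
            fderiv ℂ W y (0, Pi.single p 1) - fderiv ℂ W (y.1, 0) (0, Pi.single p 1) :=
      funext fun y => h1 y p
    rw [hfun]
    have hB : HasFDerivAt (fun y : (Fin n → ℂ) × (Fin n → ℂ) =>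
          fderiv ℂ W (y.1, 0) (0, Pi.single p 1))
        ((fderiv ℂ (fun w : (Fin n → ℂ) × (Fin n → ℂ) =>
          fderiv ℂ W w (0, Pi.single p 1)) (x.1, 0)).comp (Jm n)) x :=
      by have h := ((hφd p) (x.1, 0)).hasFDerivAt.comp x (Jm n).hasFDerivAt; exact h
    rw [(((hφd p) x).hasFDerivAt.fun_sub hB).fderiv, ContinuousLinearMap.sub_apply]
    have hzero : ((fderiv ℂ (fun w : (Fin n → ℂ) × (Fin n → ℂ) =>
        fderiv ℂ W w (0, Pi.single p 1)) (x.1, 0)).comp (Jm n))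
        ((0 : Fin n → ℂ), Pi.single i' (1:ℂ)) = 0 := by
      rw [ContinuousLinearMap.comp_apply]
      have hj : Jm n (((0 : Fin n → ℂ), Pi.single i' (1:ℂ)) : (Fin n → ℂ) × (Fin n → ℂ))
          = 0 := by
        rw [Jm_apply]; simp [Prod.ext_iff]
      rw [hj, map_zero]
    rw [hzero, sub_zero]
  -- second θz-derivatives of W'
  have h4 : ∀ (i' j' : Fin n),
      fderiv ℂ (fun y : (Fin n → ℂ) × (Fin n → ℂ) =>
          fderiv ℂ (fun x : (Fin n → ℂ) × (Fin n → ℂ) =>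
            W x - ∑ k, x.2 k * fderiv ℂ W (x.1, 0) (0, Pi.single k 1)) y (Pi.single j' 1, 0))
          x (0, Pi.single i' 1)
        = fderiv ℂ (fun y : (Fin n → ℂ) × (Fin n → ℂ) =>
            fderiv ℂ W y (Pi.single j' 1, 0)) x (0, Pi.single i' 1)
          - fderiv ℂ (fun y : (Fin n → ℂ) × (Fin n → ℂ) =>
            fderiv ℂ W y (Pi.single j' 1, 0)) (x.1, 0) (0, Pi.single i' 1) := by
    intro i' j'
    have hψ : ∀ k : Fin n, Differentiable ℂ (fun w : (Fin n → ℂ) × (Fin n → ℂ) =>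
        fderiv ℂ (fun w' : (Fin n → ℂ) × (Fin n → ℂ) =>
          fderiv ℂ W w' (0, Pi.single k 1)) w (Pi.single j' 1, 0)) :=
      fun k => (contDiff_dapply _ (contDiff_dapply W hW _) _).differentiable (by simp)
    have hfun : (fun y : (Fin n → ℂ) × (Fin n → ℂ) =>
        fderiv ℂ (fun x : (Fin n → ℂ) × (Fin n → ℂ) =>
          W x - ∑ k, x.2 k * fderiv ℂ W (x.1, 0) (0, Pi.single k 1)) y (Pi.single j' 1, 0))
        = fun y : (Fin n → ℂ) × (Fin n → ℂ) =>
            fderiv ℂ W y (Pi.single j' 1, 0)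
            - ∑ k, y.2 k * fderiv ℂ (fun w : (Fin n → ℂ) × (Fin n → ℂ) =>
                fderiv ℂ W w (0, Pi.single k 1)) (y.1, 0) (Pi.single j' 1, 0) :=
      funext fun y => h2 y j'
    rw [hfun]
    have hA : Differentiable ℂ (fun y : (Fin n → ℂ) × (Fin n → ℂ) =>
        fderiv ℂ W y (Pi.single j' 1, 0)) := (contDiff_dapply W hW _).differentiable (by simp)
    have hT := T_hasFDerivAt (fun k (w : (Fin n → ℂ) × (Fin n → ℂ)) =>
        fderiv ℂ (fun w' : (Fin n → ℂ) × (Fin n → ℂ) =>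
          fderiv ℂ W w' (0, Pi.single k 1)) w (Pi.single j' 1, 0)) hψ x
    rw [((hA x).hasFDerivAt.fun_sub hT).fderiv, ContinuousLinearMap.sub_apply, ← hT.fderiv,
      T_dtheta _ hψ x i',
      dapply_comm W hW (x.1, 0) (0, Pi.single i' 1) (Pi.single j' 1, 0)]
  -- the expression F is constant in θ
  have hC : ∀ (u v : (Fin n → ℂ) × (Fin n → ℂ)), ContDiff ℂ ⊤
      (fun y : (Fin n → ℂ) × (Fin n → ℂ) =>
        fderiv ℂ (fun w : (Fin n → ℂ) × (Fin n → ℂ) => fderiv ℂ W w u) y v) :=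
    fun u v => contDiff_dapply _ (contDiff_dapply W hW u) v
  have hFc : ContDiff ℂ ⊤ (fun y : (Fin n → ℂ) × (Fin n → ℂ) =>
      fderiv ℂ (fun x : (Fin n → ℂ) × (Fin n → ℂ) =>
        fderiv ℂ W x (Pi.single j 1, 0)) y (0, Pi.single i 1)
      - fderiv ℂ (fun x : (Fin n → ℂ) × (Fin n → ℂ) =>
        fderiv ℂ W x (Pi.single i 1, 0)) y (0, Pi.single j 1)
      - ∑ p, ∑ q, η p q
          * fderiv ℂ (fun w : (Fin n → ℂ) × (Fin n → ℂ) =>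
              fderiv ℂ W w (0, Pi.single p 1)) y (0, Pi.single i 1)
          * fderiv ℂ (fun w : (Fin n → ℂ) × (Fin n → ℂ) =>
              fderiv ℂ W w (0, Pi.single q 1)) y (0, Pi.single j 1)) :=
    ((hC _ _).sub (hC _ _)).sub (ContDiff.sum fun p _ => ContDiff.sum fun q _ =>
      (contDiff_const.mul (hC _ _)).mul (hC _ _))
  have h5 := eq_of_dtheta_zero _ (hFc.differentiable (by simp)) (fun k y => heq i j k y) x
  have hQ0 : ∀ (p i' : Fin n), fderiv ℂ (fun w : (Fin n → ℂ) × (Fin n → ℂ) =>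
      fderiv ℂ W w (0, Pi.single p 1)) (x.1, 0) (0, Pi.single i' 1) = 0 :=
    fun p i' => dtheta_dtheta_zero W hW hodd i' p x.1
  simp only [hQ0, mul_zero, zero_mul, Finset.sum_const_zero, sub_zero] at h5
  rw [h4 i j, h4 j i]
  simp only [h3]
  linear_combination h5
end

section
/- Let η ∈ Matrix (Fin n) (Fin n) ℂ and let W : (Fin n → ℂ) × (Fin n → ℂ) → ℂ be infinitely ℂ-differentiable and satisfy Plebański's second heavenly equation (for η). Define vector fields on E = (Fin n → ℂ) × (Fin n → ℂ) by v_i(z,θ) = (0, e_i) and h_i(z,θ) = (e_i, Σ_q (Σ_p η_{p q}·∂_{θ_i}∂_{θ_p}W(z,θ))·e_q). Then for all i, j the Lie brackets vanish: [v_i, v_j] = 0 and [h_i, h_j] = 0. -/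
open scoped BigOperators

section Helpers

variable {n : ℕ}

private lemma dd_contDiff {f : (Fin n → ℂ) × (Fin n → ℂ) → ℂ} (hf : ContDiff ℂ ⊤ f)
    (a : (Fin n → ℂ) × (Fin n → ℂ)) : ContDiff ℂ ⊤ (fun x => fderiv ℂ f x a) :=
  (hf.fderiv_right le_top).clm_apply contDiff_const

private lemma dir_comm {f : (Fin n → ℂ) × (Fin n → ℂ) → ℂ} (hf : ContDiff ℂ ⊤ f)
    (a b : (Fin n → ℂ) × (Fin n → ℂ)) :
    (fun x => fderiv ℂ (fun y => fderiv ℂ f y b) x a)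
      = (fun x => fderiv ℂ (fun y => fderiv ℂ f y a) x b) := by
  funext x
  have hd : DifferentiableAt ℂ (fderiv ℂ f) x :=
    ((hf.fderiv_right (m := 1) le_top).differentiable one_ne_zero).differentiableAt
  have key : ∀ w : (Fin n → ℂ) × (Fin n → ℂ),
      fderiv ℂ (fun y => fderiv ℂ f y w) x = (fderiv ℂ (fderiv ℂ f) x).flip w := by
    intro w
    have h := fderiv_clm_apply hd (differentiableAt_const w)
    simpa using h
  rw [key b, key a]
  simp only [ContinuousLinearMap.flip_apply]
  exact (hf.contDiffAt.isSymmSndFDerivAt le_top) a b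

private lemma contDiff_dθ {f : (Fin n → ℂ) × (Fin n → ℂ) → ℂ} (hf : ContDiff ℂ ⊤ f)
    (i : Fin n) : ContDiff ℂ ⊤ (dθ i f) :=
  dd_contDiff hf _

private lemma contDiff_dz {f : (Fin n → ℂ) × (Fin n → ℂ) → ℂ} (hf : ContDiff ℂ ⊤ f)
    (i : Fin n) : ContDiff ℂ ⊤ (dz i f) :=
  dd_contDiff hf _

private lemma dθ_swap {g : (Fin n → ℂ) × (Fin n → ℂ) → ℂ} (hg : ContDiff ℂ ⊤ g)
    (a b : Fin n) : dθ a (dθ b g) = dθ b (dθ a g) :=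
  dir_comm hg _ _

private lemma dzθ_swap {g : (Fin n → ℂ) × (Fin n → ℂ) → ℂ} (hg : ContDiff ℂ ⊤ g)
    (a b : Fin n) : dz a (dθ b g) = dθ b (dz a g) :=
  dir_comm hg _ _

private lemma sum_cmul_fderiv {c : Fin n → ℂ} {f : Fin n → (Fin n → ℂ) × (Fin n → ℂ) → ℂ}
    {x : (Fin n → ℂ) × (Fin n → ℂ)} (hf : ∀ p, DifferentiableAt ℂ (f p) x)
    (w : (Fin n → ℂ) × (Fin n → ℂ)) :
    fderiv ℂ (fun y => ∑ p, c p * f p y) x w = ∑ p, c p * fderiv ℂ (f p) x w := by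
  rw [fderiv_fun_sum (fun p _ => (hf p).const_mul (c p)), ContinuousLinearMap.sum_apply]
  refine Finset.sum_congr rfl fun p _ => ?_
  rw [fderiv_const_mul (hf p)]
  simp

private lemma double_sum_fderiv {c : Fin n → Fin n → ℂ}
    {f g : Fin n → (Fin n → ℂ) × (Fin n → ℂ) → ℂ} {x : (Fin n → ℂ) × (Fin n → ℂ)}
    (hf : ∀ a, DifferentiableAt ℂ (f a) x) (hg : ∀ b, DifferentiableAt ℂ (g b) x)
    (w : (Fin n → ℂ) × (Fin n → ℂ)) :
    fderiv ℂ (fun y => ∑ a, ∑ b, c a b * f a y * g b y) x w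
      = ∑ a, ∑ b, c a b * (fderiv ℂ (f a) x w * g b x + f a x * fderiv ℂ (g b) x w) := by
  have hib : ∀ a b, DifferentiableAt ℂ (fun y => c a b * f a y * g b y) x :=
    fun a b => ((hf a).const_mul (c a b)).mul (hg b)
  have hia : ∀ a, DifferentiableAt ℂ (fun y => ∑ b, c a b * f a y * g b y) x :=
    fun a => DifferentiableAt.fun_sum fun b _ => hib a b
  rw [fderiv_fun_sum (fun a _ => hia a), ContinuousLinearMap.sum_apply]
  refine Finset.sum_congr rfl fun a _ => ?_
  rw [fderiv_fun_sum (fun b _ => hib a b), ContinuousLinearMap.sum_apply]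
  refine Finset.sum_congr rfl fun b _ => ?_
  rw [fderiv_fun_mul ((hf a).const_mul (c a b)) (hg b), fderiv_const_mul (hf a)]
  simp only [ContinuousLinearMap.add_apply, ContinuousLinearMap.smul_apply, smul_eq_mul]
  ring

private lemma fderiv_apply_decomp (f : (Fin n → ℂ) × (Fin n → ℂ) → ℂ)
    (x : (Fin n → ℂ) × (Fin n → ℂ)) (i : Fin n) (G : Fin n → ℂ) :
    fderiv ℂ f x (Pi.single i 1, G)
      = fderiv ℂ f x (Pi.single i 1, 0) + ∑ r, G r * fderiv ℂ f x (0, Pi.single r 1) := by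
  have hdir : ((Pi.single i 1 : Fin n → ℂ), G)
      = (Pi.single i 1, (0 : Fin n → ℂ))
        + ∑ r, G r • (((0 : Fin n → ℂ), (Pi.single r 1 : Fin n → ℂ))) := by
    rw [Prod.ext_iff]
    constructor
    · simp [Prod.fst_sum]
    · simp only [Prod.snd_add, Prod.snd_sum, Prod.smul_mk, zero_add]
      funext t
      simp [Finset.sum_apply, Pi.single_apply, Finset.sum_ite_eq]
  rw [hdir, map_add, map_sum]
  simp only [map_smul, smul_eq_mul]

private lemma sum_swap13 {M : Type*} [AddCommMonoid M] (f : Fin n → Fin n → Fin n → M) :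
    ∑ r, ∑ a, ∑ p, f r a p = ∑ p, ∑ a, ∑ r, f r a p :=
  calc ∑ r, ∑ a, ∑ p, f r a p
      = ∑ r, ∑ p, ∑ a, f r a p := Finset.sum_congr rfl fun r _ => Finset.sum_comm
    _ = ∑ p, ∑ r, ∑ a, f r a p := Finset.sum_comm
    _ = ∑ p, ∑ a, ∑ r, f r a p := Finset.sum_congr rfl fun p _ => Finset.sum_comm

private lemma algebra_key (η : Matrix (Fin n) (Fin n) ℂ)
    (T : Fin n → Fin n → Fin n → ℂ) (U : Fin n → Fin n → ℂ) (i j q : Fin n)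
    (hT : ∀ r k p, T r k p = T p k r)
    (hQ : ∀ p, ∑ a, ∑ b, (η a b + η b a) * T p i a * U j b = 0) :
    (∑ r, (∑ a, η a r * U i a) * (∑ p, η p q * T r j p))
      - (∑ r, (∑ a, η a r * U j a) * (∑ p, η p q * T r i p))
      = ∑ p, η p q * (∑ a, ∑ b, η a b * (T p i a * U j b + U i a * T p j b)) := by
  have e2 : (∑ r, (∑ a, η a r * U i a) * (∑ p, η p q * T r j p))
      = ∑ p, ∑ a, ∑ r, η p q * (η a r * (U i a * T p j r)) := by
    rw [← sum_swap13 (fun r a p => η p q * (η a r * (U i a * T p j r)))]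
    refine Finset.sum_congr rfl fun r _ => ?_
    rw [Finset.sum_mul_sum]
    refine Finset.sum_congr rfl fun a _ => Finset.sum_congr rfl fun p _ => ?_
    rw [hT r j p]; ring
  have e3 : (∑ r, (∑ a, η a r * U j a) * (∑ p, η p q * T r i p))
      = ∑ p, ∑ a, ∑ r, η p q * (η a r * (U j a * T p i r)) := by
    rw [← sum_swap13 (fun r a p => η p q * (η a r * (U j a * T p i r)))]
    refine Finset.sum_congr rfl fun r _ => ?_
    rw [Finset.sum_mul_sum]
    refine Finset.sum_congr rfl fun a _ => Finset.sum_congr rfl fun p _ => ?_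
    rw [hT r i p]; ring
  have e1 : (∑ p, η p q * (∑ a, ∑ b, η a b * (T p i a * U j b + U i a * T p j b)))
      = (∑ p, ∑ a, ∑ b, η p q * (η a b * (T p i a * U j b)))
        + ∑ p, ∑ a, ∑ b, η p q * (η a b * (U i a * T p j b)) := by
    simp only [Finset.mul_sum, mul_add, Finset.sum_add_distrib]
  have e4 : ∀ p, (∑ a, ∑ b, η p q * (η a b * (U j a * T p i b)))
      = ∑ a, ∑ b, η p q * (η b a * (U j b * T p i a)) := fun p => Finset.sum_comm
  have key : (∑ p, ∑ a, ∑ b, η p q * (η a b * (T p i a * U j b)))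
      + (∑ p, ∑ a, ∑ b, η p q * (η a b * (U j a * T p i b))) = 0 := by
    rw [← Finset.sum_add_distrib]
    apply Finset.sum_eq_zero
    intro p _
    rw [e4 p]
    calc (∑ a, ∑ b, η p q * (η a b * (T p i a * U j b)))
          + (∑ a, ∑ b, η p q * (η b a * (U j b * T p i a)))
        = η p q * ∑ a, ∑ b, (η a b + η b a) * T p i a * U j b := by
          rw [Finset.mul_sum, ← Finset.sum_add_distrib]
          refine Finset.sum_congr rfl fun a _ => ?_
          rw [Finset.mul_sum, ← Finset.sum_add_distrib]
          refine Finset.sum_congr rfl fun b _ => ?_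
          ring
      _ = 0 := by rw [hQ p, mul_zero]
  rw [e2, e3, e1]
  linear_combination -key

end Helpers

section Main

variable {n : ℕ} (η : Matrix (Fin n) (Fin n) ℂ) (W : (Fin n → ℂ) × (Fin n → ℂ) → ℂ)

private lemma Qzero (hW : ContDiff ℂ ⊤ W) (hP : PlebanskiSecond η W) :
    ∀ p i j x, ∑ a, ∑ b, (η a b + η b a) * dθ p (dθ i (dθ a W)) x * dθ j (dθ b W) x = 0 := by
  have hu : ∀ (k p : Fin n), ContDiff ℂ ⊤ (dθ k (dθ p W)) :=
    fun k p => dd_contDiff (dd_contDiff hW _) _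
  have hud : ∀ (k p : Fin n) x, DifferentiableAt ℂ (dθ k (dθ p W)) x :=
    fun k p x => ((hu k p).differentiable (by simp)).differentiableAt
  -- the symmetrized identity
  have hI : ∀ (i j : Fin n) x,
      ∑ a, ∑ b, (η a b + η b a) * dθ i (dθ a W) x * dθ j (dθ b W) x = 0 := by
    intro i j x
    have h1 := hP i j x
    have h2 := hP j i x
    have h3 : (∑ a, ∑ b, η a b * dθ j (dθ a W) x * dθ i (dθ b W) x)
        = ∑ a, ∑ b, η b a * dθ i (dθ a W) x * dθ j (dθ b W) x := by
      rw [Finset.sum_comm]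
      exact Finset.sum_congr rfl fun a _ => Finset.sum_congr rfl fun b _ => by ring
    calc ∑ a, ∑ b, (η a b + η b a) * dθ i (dθ a W) x * dθ j (dθ b W) x
        = (∑ a, ∑ b, η a b * dθ i (dθ a W) x * dθ j (dθ b W) x)
          + ∑ a, ∑ b, η b a * dθ i (dθ a W) x * dθ j (dθ b W) x := by
          rw [← Finset.sum_add_distrib]
          refine Finset.sum_congr rfl fun a _ => ?_
          rw [← Finset.sum_add_distrib]
          exact Finset.sum_congr rfl fun b _ => by ring
      _ = (dθ i (dz j W) x - dθ j (dz i W) x) + (dθ j (dz i W) x - dθ i (dz j W) x) := by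
          rw [← h1, ← h3, ← h2]
      _ = 0 := by ring
  -- antisymmetry in the last two indices
  have ha : ∀ (p i j : Fin n) x,
      (∑ a, ∑ b, (η a b + η b a) * dθ p (dθ i (dθ a W)) x * dθ j (dθ b W) x)
        + (∑ a, ∑ b, (η a b + η b a) * dθ p (dθ j (dθ a W)) x * dθ i (dθ b W) x) = 0 := by
    intro p i j x
    have hz : (fun y => ∑ a, ∑ b, (η a b + η b a) * dθ i (dθ a W) y * dθ j (dθ b W) y)
        = fun _ => (0 : ℂ) := funext fun y => hI i j y
    have key : fderiv ℂ
        (fun y => ∑ a, ∑ b, (η a b + η b a) * dθ i (dθ a W) y * dθ j (dθ b W) y) x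
        ((0 : Fin n → ℂ), Pi.single p 1)
        = ∑ a, ∑ b, (η a b + η b a)
            * (dθ p (dθ i (dθ a W)) x * dθ j (dθ b W) x
              + dθ i (dθ a W) x * dθ p (dθ j (dθ b W)) x) :=
      double_sum_fderiv (fun a => hud i a x) (fun b => hud j b x) _
    have key0 : fderiv ℂ
        (fun y => ∑ a, ∑ b, (η a b + η b a) * dθ i (dθ a W) y * dθ j (dθ b W) y) x
        ((0 : Fin n → ℂ), Pi.single p 1) = 0 := by
      rw [hz]; simp
    have key' : (∑ a, ∑ b, (η a b + η b a)
        * (dθ p (dθ i (dθ a W)) x * dθ j (dθ b W) x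
          + dθ i (dθ a W) x * dθ p (dθ j (dθ b W)) x)) = 0 := key.symm.trans key0
    have hQ2 : (∑ a, ∑ b, (η a b + η b a) * dθ p (dθ j (dθ a W)) x * dθ i (dθ b W) x)
        = ∑ a, ∑ b, (η a b + η b a) * (dθ i (dθ a W) x * dθ p (dθ j (dθ b W)) x) := by
      rw [Finset.sum_comm]
      exact Finset.sum_congr rfl fun a _ => Finset.sum_congr rfl fun b _ => by ring
    rw [hQ2]
    calc (∑ a, ∑ b, (η a b + η b a) * dθ p (dθ i (dθ a W)) x * dθ j (dθ b W) x)
          + (∑ a, ∑ b, (η a b + η b a) * (dθ i (dθ a W) x * dθ p (dθ j (dθ b W)) x))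
        = ∑ a, ∑ b, (η a b + η b a)
            * (dθ p (dθ i (dθ a W)) x * dθ j (dθ b W) x
              + dθ i (dθ a W) x * dθ p (dθ j (dθ b W)) x) := by
          rw [← Finset.sum_add_distrib]
          refine Finset.sum_congr rfl fun a _ => ?_
          rw [← Finset.sum_add_distrib]
          exact Finset.sum_congr rfl fun b _ => by ring
      _ = 0 := key'
  -- symmetry in the first two indices
  have hs : ∀ (p i j : Fin n) x,
      (∑ a, ∑ b, (η a b + η b a) * dθ p (dθ i (dθ a W)) x * dθ j (dθ b W) x)
        = ∑ a, ∑ b, (η a b + η b a) * dθ i (dθ p (dθ a W)) x * dθ j (dθ b W) x := by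
    intro p i j x
    refine Finset.sum_congr rfl fun a _ => Finset.sum_congr rfl fun b _ => ?_
    rw [dθ_swap (contDiff_dθ hW a) p i]
  intro p i j x
  have e1 := hs p i j x
  have e2 := ha i p j x
  have e3 := hs i j p x
  have e4 := ha j i p x
  have e5 := hs j p i x
  have e6 := ha p j i x
  linear_combination (e1 + e2 - e3 - e4 + e5 + e6) / 2

private lemma main1 (hW : ContDiff ℂ ⊤ W) (hP : PlebanskiSecond η W) :
    ∀ p i j x, dz i (dθ j (dθ p W)) x - dz j (dθ i (dθ p W)) x
      = -(∑ a, ∑ b, η a b * (dθ p (dθ i (dθ a W)) x * dθ j (dθ b W) x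
          + dθ i (dθ a W) x * dθ p (dθ j (dθ b W)) x)) := by
  intro p i j x
  have hud : ∀ (k p : Fin n) x, DifferentiableAt ℂ (dθ k (dθ p W)) x :=
    fun k p x => (((dd_contDiff (dd_contDiff hW _) _ : ContDiff ℂ ⊤ (dθ k (dθ p W)))).differentiable (by simp)).differentiableAt
  have hz1 : dz i (dθ j (dθ p W)) = dθ p (dθ j (dz i W)) := by
    rw [dzθ_swap (contDiff_dθ hW p) i j, dzθ_swap hW i p,
      dθ_swap (contDiff_dz hW i) j p]
  have hz2 : dz j (dθ i (dθ p W)) = dθ p (dθ i (dz j W)) := by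
    rw [dzθ_swap (contDiff_dθ hW p) j i, dzθ_swap hW j p,
      dθ_swap (contDiff_dz hW j) i p]
  rw [hz1, hz2]
  have hfun : dθ i (dz j W) = fun y => dθ j (dz i W) y
      + ∑ a, ∑ b, η a b * dθ i (dθ a W) y * dθ j (dθ b W) y := by
    funext y
    have h := hP i j y
    linear_combination h
  rw [hfun]
  have hF1d : DifferentiableAt ℂ (dθ j (dz i W)) x :=
    ((dd_contDiff (dd_contDiff hW _) _ : ContDiff ℂ ⊤ (dθ j (dz i W))).differentiable (by simp)).differentiableAt
  have hRd : DifferentiableAt ℂ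
      (fun y => ∑ a, ∑ b, η a b * dθ i (dθ a W) y * dθ j (dθ b W) y) x := by
    apply DifferentiableAt.fun_sum; intro a _
    apply DifferentiableAt.fun_sum; intro b _
    exact ((hud i a x).const_mul _).mul (hud j b x)
  have hadd : dθ p (fun y => dθ j (dz i W) y
      + ∑ a, ∑ b, η a b * dθ i (dθ a W) y * dθ j (dθ b W) y) x
      = dθ p (dθ j (dz i W)) x
        + fderiv ℂ (fun y => ∑ a, ∑ b, η a b * dθ i (dθ a W) y * dθ j (dθ b W) y) x
            ((0 : Fin n → ℂ), Pi.single p 1) := by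
    show fderiv ℂ _ x _ = _
    rw [fderiv_fun_add hF1d hRd]
    simp only [ContinuousLinearMap.add_apply]
    rfl
  rw [hadd]
  have hDR : fderiv ℂ (fun y => ∑ a, ∑ b, η a b * dθ i (dθ a W) y * dθ j (dθ b W) y) x
      ((0 : Fin n → ℂ), Pi.single p 1)
      = ∑ a, ∑ b, η a b * (dθ p (dθ i (dθ a W)) x * dθ j (dθ b W) x
          + dθ i (dθ a W) x * dθ p (dθ j (dθ b W)) x) :=
    double_sum_fderiv (fun a => hud i a x) (fun b => hud j b x) _
  rw [hDR]
  ring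

end Main

/-- If `W` is smooth and satisfies Plebański's second heavenly equation for `η`,
then the vector fields `v_i(z,θ) = (0, e_i)` and
`h_i(z,θ) = (e_i, Σ_q (Σ_p η p q · ∂_{θ_i}∂_{θ_p}W(z,θ))·e_q)` satisfy
`[v_i, v_j] = 0` and `[h_i, h_j] = 0` for all `i, j`. -/
theorem stmt_11 {n : ℕ} (η : Matrix (Fin n) (Fin n) ℂ)
    (W : (Fin n → ℂ) × (Fin n → ℂ) → ℂ)
    (hW : ContDiff ℂ ⊤ W)
    (hP : PlebanskiSecond η W)
    (v h : Fin n → ((Fin n → ℂ) × (Fin n → ℂ)) → ((Fin n → ℂ) × (Fin n → ℂ)))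
    (hv : ∀ i x, v i x = (0, Pi.single i 1))
    (hh : ∀ i x, h i x = (Pi.single i 1, fun q => ∑ p, η p q * dθ i (dθ p W) x)) :
    ∀ i j, VectorField.lieBracket ℂ (v i) (v j) = 0 ∧
      VectorField.lieBracket ℂ (h i) (h j) = 0 := by
  intro i j
  have hu : ∀ (k p : Fin n), ContDiff ℂ ⊤ (dθ k (dθ p W)) :=
    fun k p => dd_contDiff (dd_contDiff hW _) _
  have hud : ∀ (k p : Fin n) x, DifferentiableAt ℂ (dθ k (dθ p W)) x :=
    fun k p x => ((hu k p).differentiable (by simp)).differentiableAt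
  constructor
  · funext x
    have hvi : v i = fun _ => ((0 : Fin n → ℂ), Pi.single i 1) := funext (hv i)
    have hvj : v j = fun _ => ((0 : Fin n → ℂ), Pi.single j 1) := funext (hv j)
    simp [VectorField.lieBracket, hvi, hvj]
  · funext x
    show fderiv ℂ (h j) x (h i x) - fderiv ℂ (h i) x (h j x) = 0
    -- differentiability of components
    have hcompd : ∀ (k q : Fin n) (y : (Fin n → ℂ) × (Fin n → ℂ)),
        DifferentiableAt ℂ (fun y => ∑ p, η p q * dθ k (dθ p W) y) y :=
      fun k q y => DifferentiableAt.fun_sum fun p _ => (hud k p y).const_mul _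
    have hGdiff : ∀ (k : Fin n) (y : (Fin n → ℂ) × (Fin n → ℂ)),
        DifferentiableAt ℂ (fun y (q : Fin n) => ∑ p, η p q * dθ k (dθ p W) y) y :=
      fun k y => differentiableAt_pi.mpr fun q => hcompd k q y
    have hhk : ∀ k : Fin n, h k
        = fun y => ((Pi.single k 1 : Fin n → ℂ), fun q => ∑ p, η p q * dθ k (dθ p W) y) :=
      fun k => funext fun y => hh k y
    have hfd : ∀ k : Fin n, fderiv ℂ (h k) x
        = (0 : ((Fin n → ℂ) × (Fin n → ℂ)) →L[ℂ] (Fin n → ℂ)).prod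
            (fderiv ℂ (fun y (q : Fin n) => ∑ p, η p q * dθ k (dθ p W) y) x) := by
      intro k
      rw [hhk k]
      exact ((hasFDerivAt_const _ _).prodMk (hGdiff k x).hasFDerivAt).fderiv
    have hGfd : ∀ k : Fin n,
        fderiv ℂ (fun y (q : Fin n) => ∑ p, η p q * dθ k (dθ p W) y) x
          = ContinuousLinearMap.pi
              (fun q => fderiv ℂ (fun y => ∑ p, η p q * dθ k (dθ p W) y) x) :=
      fun k => fderiv_pi fun q => hcompd k q x
    rw [hfd i, hfd j, hh i x, hh j x]
    simp only [ContinuousLinearMap.prod_apply, ContinuousLinearMap.zero_apply]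
    rw [Prod.mk_sub_mk, Prod.mk_eq_zero]
    constructor
    · simp
    · rw [hGfd i, hGfd j]
      funext q
      simp only [Pi.sub_apply, Pi.zero_apply, ContinuousLinearMap.pi_apply]
      -- decompose the directions
    
      rw [fderiv_apply_decomp (fun y => ∑ p, η p q * dθ j (dθ p W) y) x i
            (fun q' => ∑ p, η p q' * dθ i (dθ p W) x),
          fderiv_apply_decomp (fun y => ∑ p, η p q * dθ i (dθ p W) y) x j
            (fun q' => ∑ p, η p q' * dθ j (dθ p W) x)]
      have hs1 : ∀ k l qq : Fin n,
          fderiv ℂ (fun y => ∑ p, η p qq * dθ k (dθ p W) y) x ((Pi.single l 1 : Fin n → ℂ), 0)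
            = ∑ p, η p qq * dz l (dθ k (dθ p W)) x :=
        fun k l qq => sum_cmul_fderiv (fun p => hud k p x) _
      have hs2 : ∀ k r qq : Fin n,
          fderiv ℂ (fun y => ∑ p, η p qq * dθ k (dθ p W) y) x ((0 : Fin n → ℂ), Pi.single r 1)
            = ∑ p, η p qq * dθ r (dθ k (dθ p W)) x :=
        fun k r qq => sum_cmul_fderiv (fun p => hud k p x) _
      simp only [hs1, hs2]
      -- now a pure algebraic identity
      have hT : ∀ r k p : Fin n, dθ r (dθ k (dθ p W)) x = dθ p (dθ k (dθ r W)) x := by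
        intro r k p
        rw [dθ_swap (contDiff_dθ hW p) r k, dθ_swap hW r p,
          dθ_swap (contDiff_dθ hW r) k p]
      have k2 : (∑ r, (∑ a, η a r * dθ i (dθ a W) x)
              * (∑ p, η p q * dθ r (dθ j (dθ p W)) x))
          - (∑ r, (∑ a, η a r * dθ j (dθ a W) x)
              * (∑ p, η p q * dθ r (dθ i (dθ p W)) x))
          = ∑ p, η p q * (∑ a, ∑ b, η a b * (dθ p (dθ i (dθ a W)) x * dθ j (dθ b W) x
              + dθ i (dθ a W) x * dθ p (dθ j (dθ b W)) x)) :=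
        algebra_key η (fun r k p => dθ r (dθ k (dθ p W)) x) (fun k p => dθ k (dθ p W) x)
          i j q hT (fun p => Qzero η W hW hP p i j x)
      have k1 : (∑ p, η p q * dz i (dθ j (dθ p W)) x)
          - (∑ p, η p q * dz j (dθ i (dθ p W)) x)
          = -(∑ p, η p q * (∑ a, ∑ b, η a b * (dθ p (dθ i (dθ a W)) x * dθ j (dθ b W) x
              + dθ i (dθ a W) x * dθ p (dθ j (dθ b W)) x))) := by
        rw [← Finset.sum_sub_distrib, ← Finset.sum_neg_distrib]
        refine Finset.sum_congr rfl fun p _ => ?_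
        rw [← mul_sub, main1 η W hW hP p i j x, mul_neg]
      linear_combination k1 + k2
end

section
/- Let U ⊆ (Fin n → ℂ) be a nonempty convex open set and let c_{j k} : U → ℂ (j, k ∈ Fin n) be ℂ-analytic functions satisfying c_{j k} = c_{k j} and ∂_i c_{j k} = ∂_j c_{i k} on U for all i, j, k (where ∂_i denotes the directional derivative along the standard basis vector e_i). Then there exists a ℂ-analytic function W : U → ℂ with ∂_j ∂_k W = c_{j k} on U for all j, k. -/
open Set Metric MeasureTheory intervalIntegral
open scoped Interval

lemma pi_single_eq_smul {n : ℕ} (i : Fin n) (a : ℂ) :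
    Pi.single i a = a • (Pi.single i 1 : Fin n → ℂ) := by
  ext k
  by_cases h : k = i <;> simp [Pi.single_apply, h]

lemma clm_repr {n : ℕ} (L : (Fin n → ℂ) →L[ℂ] ℂ) :
    L = ∑ j, L (Pi.single j 1) • (ContinuousLinearMap.proj j :
      (Fin n → ℂ) →L[ℂ] ℂ) := by
  ext x
  have hx : x = ∑ j, Pi.single j (x j) := (Finset.univ_sum_single x).symm
  conv_lhs => rw [hx]
  rw [map_sum]
  simp only [ContinuousLinearMap.sum_apply, ContinuousLinearMap.smul_apply,
    ContinuousLinearMap.proj_apply]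
  refine Finset.sum_congr rfl fun j _ => ?_
  rw [pi_single_eq_smul, L.map_smul]
  simp [mul_comm]

lemma clm_apply_sub {n : ℕ} (L : (Fin n → ℂ) →L[ℂ] ℂ) (x y : Fin n → ℂ) :
    L (x - y) = ∑ i, (x i - y i) * L (Pi.single i 1) := by
  conv_lhs => rw [show x - y = ∑ i, Pi.single i ((x - y) i) from (Finset.univ_sum_single _).symm]
  rw [map_sum]
  refine Finset.sum_congr rfl fun i _ => ?_
  rw [pi_single_eq_smul, L.map_smul]
  simp

lemma norm_proj_le {n : ℕ} (i : Fin n) :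
    ‖(ContinuousLinearMap.proj i : (Fin n → ℂ) →L[ℂ] ℂ)‖ ≤ 1 :=
  ContinuousLinearMap.opNorm_le_bound _ zero_le_one fun z => by
    simpa using norm_le_pi_norm z i

lemma cauchy_deriv_bound {n : ℕ} {f : (Fin n → ℂ) → ℂ} {U : Set (Fin n → ℂ)}
    (hopen : IsOpen U) (hf : DifferentiableOn ℂ f U) {z v : Fin n → ℂ} {δ C : ℝ}
    (hδ : 0 < δ) (hsub : ∀ w : ℂ, ‖w‖ ≤ δ → z + w • v ∈ U)
    (hC : ∀ w : ℂ, ‖w‖ ≤ δ → ‖f (z + w • v)‖ ≤ C) :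
    ‖fderiv ℂ f z v‖ ≤ C / δ := by
  set φ : ℂ → ℂ := fun w => f (z + w • v) with hφ
  have hline : ∀ w : ℂ, HasDerivAt (fun w : ℂ => z + w • v) v w := fun w => by
    simpa using ((hasDerivAt_id w).smul_const v).const_add z
  have hdiffat : ∀ w : ℂ, ‖w‖ ≤ δ → DifferentiableAt ℂ φ w := by
    intro w hw
    exact ((hf.differentiableAt (hopen.mem_nhds (hsub w hw))).hasFDerivAt.comp_hasDerivAt w
      (hline w)).differentiableAt
  have hd : DiffContOnCl ℂ φ (ball 0 δ) := by
    apply DifferentiableOn.diffContOnCl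
    intro w hw
    have hw' : ‖w‖ ≤ δ := by
      have := closure_ball_subset_closedBall hw
      simpa using this
    exact (hdiffat w hw').differentiableWithinAt
  have hder : HasDerivAt φ (fderiv ℂ f z v) 0 := by
    have h0 : z + (0:ℂ) • v = z := by simp
    have hD := (hf.differentiableAt (hopen.mem_nhds (hsub 0 (by simp [hδ.le])))).hasFDerivAt
    have := hD.comp_hasDerivAt 0 (hline 0)
    rw [h0] at this
    exact this
  calc ‖fderiv ℂ f z v‖ = ‖deriv φ 0‖ := by rw [hder.deriv]
    _ ≤ C / δ := Complex.norm_deriv_le_of_forall_mem_sphere_norm_le hδ hd fun w hw => by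
        refine hC w ?_
        have : dist w 0 = δ := hw
        simp only [dist_zero_right] at this
        exact this.le

lemma fderiv_opnorm_bound {n : ℕ} {f : (Fin n → ℂ) → ℂ} {U : Set (Fin n → ℂ)}
    (hopen : IsOpen U) (hf : DifferentiableOn ℂ f U) {K : Set (Fin n → ℂ)} {δ C : ℝ}
    (hδ : 0 < δ) (hCnn : 0 ≤ C) (hsub : cthickening δ K ⊆ U)
    (hC : ∀ z ∈ cthickening δ K, ‖f z‖ ≤ C) :
    ∀ z ∈ K, ‖fderiv ℂ f z‖ ≤ C / δ := by
  intro z hz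
  refine ContinuousLinearMap.opNorm_le_bound _ (div_nonneg hCnn hδ.le) fun v => ?_
  by_cases hv : v = 0
  · simp [hv]
  have hvn : (0:ℝ) < ‖v‖ := norm_pos_iff.2 hv
  have hmem : ∀ w : ℂ, ‖w‖ ≤ δ / ‖v‖ → z + w • v ∈ cthickening δ K := by
    intro w hw
    refine Metric.mem_cthickening_of_dist_le _ z δ K hz ?_
    have : dist (z + w • v) z = ‖w‖ * ‖v‖ := by
      simp [dist_eq_norm, norm_smul]
    rw [this]
    calc ‖w‖ * ‖v‖ ≤ (δ / ‖v‖) * ‖v‖ := by gcongr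
      _ = δ := div_mul_cancel₀ _ hvn.ne'
  have key := cauchy_deriv_bound hopen hf (div_pos hδ hvn)
    (fun w hw => hsub (hmem w hw)) (fun w hw => hC _ (hmem w hw))
  calc ‖(fderiv ℂ f z) v‖ ≤ C / (δ / ‖v‖) := key
    _ = C / δ * ‖v‖ := by rw [div_div_eq_mul_div, div_mul_eq_mul_div]

lemma uIoc_subset_Icc : Ι (0:ℝ) 1 ⊆ Icc (0:ℝ) 1 := by
  rw [Set.uIoc_of_le zero_le_one]; exact Set.Ioc_subset_Icc_self

lemma aesm_fderiv_comp {n : ℕ} {f : (Fin n → ℂ) → ℂ} {U : Set (Fin n → ℂ)}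
    (hopen : IsOpen U) (hf : DifferentiableOn ℂ f U) {γ : ℝ → Fin n → ℂ}
    (hγ : Continuous γ) (hmaps : ∀ t ∈ Icc (0:ℝ) 1, γ t ∈ U) (v : Fin n → ℂ) :
    AEStronglyMeasurable (fun t => fderiv ℂ f (γ t) v) (volume.restrict (Ι (0:ℝ) 1)) := by
  have hK : IsCompact (γ '' Icc (0:ℝ) 1) := (isCompact_Icc).image hγ
  have hKU : γ '' Icc (0:ℝ) 1 ⊆ U := by rintro _ ⟨t, ht, rfl⟩; exact hmaps t ht
  obtain ⟨δ, hδ, hsubU⟩ := hK.exists_cthickening_subset_open hopen hKU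
  set N : ℕ := ⌈‖v‖ / δ⌉₊ + 1 with hN
  set c : ℕ → ℂ := fun m => ((m + N : ℕ) : ℂ) with hc
  have hcnorm : ∀ m, ‖c m‖ = ((m + N : ℕ) : ℝ) := by
    intro m
    rw [hc]
    rw [Complex.norm_natCast]
  have hcpos : ∀ m, (0:ℝ) < ‖c m‖ := by
    intro m; rw [hcnorm]; positivity
  have hshift : ∀ m, ∀ t ∈ Icc (0:ℝ) 1, γ t + (c m)⁻¹ • v ∈ U := by
    intro m t ht
    apply hsubU
    refine Metric.mem_cthickening_of_dist_le _ (γ t) δ _ ⟨t, ht, rfl⟩ ?_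
    have h1 : dist (γ t + (c m)⁻¹ • v) (γ t) = ‖v‖ / ‖c m‖ := by
      simp [dist_eq_norm, norm_smul, div_eq_inv_mul]
    rw [h1]
    have h2 : ‖v‖ / δ ≤ ((m + N : ℕ) : ℝ) := by
      calc ‖v‖ / δ ≤ (⌈‖v‖ / δ⌉₊ : ℝ) := Nat.le_ceil _
        _ ≤ ((m + N : ℕ) : ℝ) := by push_cast [hN]; linarith
    rw [div_le_iff₀ (hcpos m), hcnorm]
    calc ‖v‖ ≤ δ * (‖v‖/δ) := by rw [mul_div_cancel₀ _ hδ.ne']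
      _ ≤ δ * ((m + N : ℕ) : ℝ) := by gcongr
  have hhm : ∀ m : ℕ, AEStronglyMeasurable
      (fun t => c m • (f (γ t + (c m)⁻¹ • v) - f (γ t))) (volume.restrict (Ι (0:ℝ) 1)) := by
    intro m
    have hcont : ContinuousOn (fun t => c m • (f (γ t + (c m)⁻¹ • v) - f (γ t)))
        (Icc (0:ℝ) 1) := by
      apply ContinuousOn.fun_const_smul
      apply ContinuousOn.sub
      · exact (hf.continuousOn.comp ((hγ.add continuous_const).continuousOn)
          fun t ht => hshift m t ht)
      · exact hf.continuousOn.comp hγ.continuousOn fun t ht => hmaps t ht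
    exact (hcont.aestronglyMeasurable measurableSet_Icc).mono_measure
      (Measure.restrict_mono uIoc_subset_Icc le_rfl)
  apply aestronglyMeasurable_of_tendsto_ae Filter.atTop hhm
  filter_upwards [ae_restrict_mem measurableSet_uIoc] with t ht
  have hD := (hf.differentiableAt (hopen.mem_nhds (hmaps t (uIoc_subset_Icc ht)))).hasFDerivAt
  refine hD.lim v ?_
  have : Filter.Tendsto (fun m : ℕ => ((m + N : ℕ) : ℝ)) Filter.atTop Filter.atTop :=
    tendsto_natCast_atTop_atTop.comp (Filter.tendsto_add_atTop_nat N)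
  simpa only [hcnorm] using this

set_option maxHeartbeats 1000000 in
lemma poincare {U : Set (Fin n → ℂ)} (hconv : Convex ℝ U) (hopen : IsOpen U)
    {x₀ : Fin n → ℂ} (hx₀ : x₀ ∈ U) (f : Fin n → (Fin n → ℂ) → ℂ)
    (hf : ∀ i, DifferentiableOn ℂ (f i) U)
    (hcl : ∀ i j, ∀ x ∈ U,
      fderiv ℂ (f i) x (Pi.single j 1) = fderiv ℂ (f j) x (Pi.single i 1)) :
    ∃ g, DifferentiableOn ℂ g U ∧ ∀ j, ∀ x ∈ U, fderiv ℂ g x (Pi.single j 1) = f j x := by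
  classical
  set γ : (Fin n → ℂ) → ℝ → (Fin n → ℂ) := fun x t => x₀ + (t:ℂ) • (x - x₀) with hγdef
  set F : (Fin n → ℂ) → ℝ → ℂ := fun x t => ∑ i, f i (γ x t) * (x i - x₀ i) with hFdef
  set F' : (Fin n → ℂ) → ℝ → ((Fin n → ℂ) →L[ℂ] ℂ) := fun x t =>
    ∑ i, (f i (γ x t) • (ContinuousLinearMap.proj i : (Fin n → ℂ) →L[ℂ] ℂ)
      + (x i - x₀ i) • ((t:ℂ) • fderiv ℂ (f i) (γ x t))) with hF'def
  have hmem : ∀ x ∈ U, ∀ t ∈ Icc (0:ℝ) 1, γ x t ∈ U := by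
    intro x hx t ht
    have hrw : γ x t = (1 - t) • x₀ + t • x := by
      show x₀ + (t:ℂ) • (x - x₀) = _
      rw [show ((t:ℂ)) = algebraMap ℝ ℂ t from rfl, algebraMap_smul]
      module
    rw [hrw]
    exact hconv hx₀ hx (by linarith [ht.2]) ht.1 (by ring)
  have hγcont : ∀ x, Continuous (γ x) := by
    intro x
    show Continuous fun t : ℝ => x₀ + (t:ℂ) • (x - x₀)
    fun_prop
  have hγcont2 : ∀ t : ℝ, Continuous fun y => γ y t := by
    intro t
    show Continuous fun y => x₀ + (t:ℂ) • (y - x₀)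
    fun_prop
  -- pointwise derivative of F in x
  have hFD : ∀ t ∈ Icc (0:ℝ) 1, ∀ y ∈ U, HasFDerivAt (fun z => F z t) (F' y t) y := by
    intro t ht y hy
    refine HasFDerivAt.fun_sum fun i _ => ?_
    have hout : HasFDerivAt (fun z => γ z t)
        ((t:ℂ) • ContinuousLinearMap.id ℂ (Fin n → ℂ)) y := by
      have h1 : HasFDerivAt (fun z : Fin n → ℂ => z - x₀)
          (ContinuousLinearMap.id ℂ (Fin n → ℂ)) y := (hasFDerivAt_id y).sub_const x₀
      exact (h1.const_smul ((t:ℂ))).const_add x₀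
    have hfi : HasFDerivAt (f i) (fderiv ℂ (f i) (γ y t)) (γ y t) :=
      ((hf i).differentiableAt (hopen.mem_nhds (hmem y hy t ht))).hasFDerivAt
    have hcomp := hfi.comp y hout
    have hcomp' : HasFDerivAt (fun z => f i (γ z t))
        ((t:ℂ) • fderiv ℂ (f i) (γ y t)) y := by
      refine hcomp.congr_fderiv ?_
      ext v; simp
    have hproj : HasFDerivAt (fun z : Fin n → ℂ => z i - x₀ i)
        ((ContinuousLinearMap.proj i : (Fin n → ℂ) →L[ℂ] ℂ)) y := by
      have h := (ContinuousLinearMap.proj (R := ℂ) (φ := fun _ : Fin n => ℂ)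
        i).hasFDerivAt (x := y)
      exact h.sub_const (x₀ i)
    exact hcomp'.mul hproj
  -- main per-point statement
  have key : ∀ x ∈ U,
      HasFDerivAt (fun y => ∫ t in (0:ℝ)..1, F y t) (∫ t in (0:ℝ)..1, F' x t) x ∧
      IntervalIntegrable (F' x) volume 0 1 := by
    intro x hx
    obtain ⟨ε, hε, hball⟩ : ∃ ε > 0, closedBall x ε ⊆ U :=
      Metric.nhds_basis_closedBall.mem_iff.1 (hopen.mem_nhds hx)
    set K := (fun p : ℝ × (Fin n → ℂ) => γ p.2 p.1) '' (Icc (0:ℝ) 1 ×ˢ closedBall x ε)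
      with hKdef
    have hKcomp : IsCompact K := by
      refine (isCompact_Icc.prod (isCompact_closedBall x ε)).image ?_
      show Continuous fun p : ℝ × (Fin n → ℂ) => x₀ + ((p.1 : ℂ)) • (p.2 - x₀)
      fun_prop
    have hKmem : ∀ t ∈ Icc (0:ℝ) 1, ∀ y ∈ closedBall x ε, γ y t ∈ K :=
      fun t ht y hy => ⟨(t, y), ⟨ht, hy⟩, rfl⟩
    have hKU : K ⊆ U := by
      rintro _ ⟨⟨t, y⟩, ⟨ht, hy⟩, rfl⟩
      exact hmem y (hball hy) t ht
    obtain ⟨δ, hδ, hδU⟩ := hKcomp.exists_cthickening_subset_open hopen hKU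
    have hKK' : K ⊆ cthickening δ K := self_subset_cthickening K
    have hCex : ∀ i : Fin n, ∃ C : ℝ, 0 ≤ C ∧ ∀ z ∈ cthickening δ K, ‖f i z‖ ≤ C := by
      intro i
      obtain ⟨C, hC⟩ := (hKcomp.cthickening).exists_bound_of_continuousOn
        ((hf i).continuousOn.mono hδU)
      exact ⟨max C 0, le_max_right _ _, fun z hz => (hC z hz).trans (le_max_left _ _)⟩
    choose C hC0 hC using hCex
    have hfd : ∀ i, ∀ z ∈ K, ‖fderiv ℂ (f i) z‖ ≤ C i / δ := fun i =>
      fderiv_opnorm_bound hopen (hf i) hδ (hC0 i) hδU (hC i)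
    set R := ‖x - x₀‖ + ε with hRdef
    have hRnn : 0 ≤ R := add_nonneg (norm_nonneg _) hε.le
    set B := ∑ i : Fin n, (C i + R * (C i / δ)) with hBdef
    have hbound : ∀ t ∈ Icc (0:ℝ) 1, ∀ y ∈ closedBall x ε, ‖F' y t‖ ≤ B := by
      intro t ht y hy
      have hyR : ∀ i, ‖y i - x₀ i‖ ≤ R := by
        intro i
        calc ‖y i - x₀ i‖ = ‖(y - x₀) i‖ := by simp
          _ ≤ ‖y - x₀‖ := norm_le_pi_norm _ i
          _ ≤ ‖y - x‖ + ‖x - x₀‖ := norm_sub_le_norm_sub_add_norm_sub _ _ _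
          _ ≤ ε + ‖x - x₀‖ := by
              have := mem_closedBall_iff_norm.1 hy
              linarith
          _ = R := by rw [hRdef]; ring
      refine (norm_sum_le _ _).trans (Finset.sum_le_sum fun i _ => ?_)
      have hmemK : γ y t ∈ K := hKmem t ht y hy
      have ht1 : ‖((t:ℝ) : ℂ)‖ ≤ 1 := by
        rw [Complex.norm_real, Real.norm_eq_abs, abs_of_nonneg ht.1]
        exact ht.2
      refine (norm_add_le _ _).trans ?_
      have h1 : ‖f i (γ y t) • (ContinuousLinearMap.proj i :
          (Fin n → ℂ) →L[ℂ] ℂ)‖ ≤ C i := by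
        calc ‖f i (γ y t) • (ContinuousLinearMap.proj i : (Fin n → ℂ) →L[ℂ] ℂ)‖
            ≤ ‖f i (γ y t)‖ * ‖(ContinuousLinearMap.proj i : (Fin n → ℂ) →L[ℂ] ℂ)‖ :=
              ContinuousLinearMap.opNorm_smul_le _ _
          _ ≤ C i * 1 := mul_le_mul (hC i _ (hKK' hmemK)) (norm_proj_le i)
                (norm_nonneg _) (hC0 i)
          _ = C i := mul_one _
      have h2 : ‖(y i - x₀ i) • (((t:ℝ):ℂ) • fderiv ℂ (f i) (γ y t))‖
          ≤ R * (C i / δ) := by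
        calc ‖(y i - x₀ i) • (((t:ℝ):ℂ) • fderiv ℂ (f i) (γ y t))‖
            ≤ ‖y i - x₀ i‖ * ‖((t:ℝ):ℂ) • fderiv ℂ (f i) (γ y t)‖ :=
              ContinuousLinearMap.opNorm_smul_le _ _
          _ ≤ ‖y i - x₀ i‖ * (‖((t:ℝ):ℂ)‖ * ‖fderiv ℂ (f i) (γ y t)‖) := by
              apply mul_le_mul_of_nonneg_left (ContinuousLinearMap.opNorm_smul_le _ _)
                (norm_nonneg _)
          _ ≤ R * (1 * (C i / δ)) := by
              apply mul_le_mul (hyR i)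
                (mul_le_mul ht1 (hfd i _ hmemK) (norm_nonneg _) zero_le_one)
                (by positivity) hRnn
          _ = R * (C i / δ) := by ring
      linarith
    have hcontF : ∀ y, y ∈ U → ContinuousOn (F y) (Icc (0:ℝ) 1) := by
      intro y hy
      refine continuousOn_finset_sum _ fun i _ => ContinuousOn.mul ?_ continuousOn_const
      exact (hf i).continuousOn.comp (hγcont y).continuousOn fun t ht => hmem y hy t ht
    have hmeasF' : AEStronglyMeasurable (F' x) (volume.restrict (Ι (0:ℝ) 1)) := by
      have hrepr : F' x = fun t => ∑ i,
          ((f i (γ x t)) • (ContinuousLinearMap.proj i : (Fin n → ℂ) →L[ℂ] ℂ)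
          + ∑ j, ((x i - x₀ i) * ((t:ℝ):ℂ) * fderiv ℂ (f i) (γ x t) (Pi.single j 1)) •
            (ContinuousLinearMap.proj j : (Fin n → ℂ) →L[ℂ] ℂ)) := by
        funext t
        refine Finset.sum_congr rfl fun i _ => ?_
        congr 1
        conv_lhs => rw [clm_repr (fderiv ℂ (f i) (γ x t))]
        rw [Finset.smul_sum, Finset.smul_sum]
        refine Finset.sum_congr rfl fun j _ => ?_
        rw [smul_smul, smul_smul, mul_assoc]
      rw [hrepr]
      refine Finset.aestronglyMeasurable_fun_sum _ fun i _ => ?_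
      have hcγ : ContinuousOn (fun t => f i (γ x t)) (Icc (0:ℝ) 1) :=
        (hf i).continuousOn.comp (hγcont x).continuousOn fun t ht => hmem x hx t ht
      have hfiaesm : AEStronglyMeasurable (fun t => f i (γ x t))
          (volume.restrict (Ι (0:ℝ) 1)) :=
        (hcγ.aestronglyMeasurable measurableSet_Icc).mono_measure
          (Measure.restrict_mono uIoc_subset_Icc le_rfl)
      refine AEStronglyMeasurable.add ?_ ?_
      · exact hfiaesm.smul aestronglyMeasurable_const
      · refine Finset.aestronglyMeasurable_fun_sum _ fun j _ => ?_
        refine AEStronglyMeasurable.fun_smul ?_ aestronglyMeasurable_const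
        refine AEStronglyMeasurable.mul ?_ ?_
        · exact (aestronglyMeasurable_const.mul
            (Complex.continuous_ofReal.aestronglyMeasurable))
        · exact aesm_fderiv_comp hopen (hf i) (hγcont x)
            (fun t ht => hmem x hx t ht) (Pi.single j 1)
    have hintF' : IntervalIntegrable (F' x) volume 0 1 := by
      rw [intervalIntegrable_iff]
      haveI : IsFiniteMeasure (volume.restrict (Ι (0:ℝ) 1)) := by
        constructor
        rw [Measure.restrict_apply_univ, Set.uIoc_of_le (zero_le_one (α := ℝ))]
        exact measure_Ioc_lt_top
      refine Integrable.mono' (integrable_const B) hmeasF' ?_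
      filter_upwards [ae_restrict_mem measurableSet_uIoc] with t ht
      exact hbound t (uIoc_subset_Icc ht) x (mem_closedBall_self hε.le)
    refine ⟨?_, hintF'⟩
    refine intervalIntegral.hasFDerivAt_integral_of_dominated_of_fderiv_le
      (F := F) (F' := F') (bound := fun _ => B) (Metric.ball_mem_nhds x hε) ?_ ?_ hmeasF' ?_ ?_ ?_
    · filter_upwards [Metric.closedBall_mem_nhds x hε] with y hy
      exact ((hcontF y (hball hy)).aestronglyMeasurable measurableSet_Icc).mono_measure
        (Measure.restrict_mono uIoc_subset_Icc le_rfl)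
    · apply ContinuousOn.intervalIntegrable
      rw [Set.uIcc_of_le zero_le_one]
      exact hcontF x hx
    · filter_upwards with t
      intro ht y hy
      exact hbound t (uIoc_subset_Icc ht) y (ball_subset_closedBall hy)
    · exact intervalIntegrable_const
    · filter_upwards with t
      intro ht y hy
      exact hFD t (uIoc_subset_Icc ht) y (hball (ball_subset_closedBall hy))
  -- identify the derivative using FTC
  have happly : ∀ x ∈ U, ∀ j,
      (∫ t in (0:ℝ)..1, F' x t) (Pi.single j 1) = f j x := by
    intro x hx j
    have hint := (key x hx).2
    have hint1 : IntegrableOn (F' x) (Ioc (0:ℝ) 1) volume := hint.1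
    have hintj : IntervalIntegrable (fun t => F' x t (Pi.single j 1)) volume 0 1 := by
      rw [intervalIntegrable_iff, Set.uIoc_of_le (zero_le_one (α := ℝ))]
      exact hint1.apply_continuousLinearMap (Pi.single j 1)
    have happeq : (∫ t in (0:ℝ)..1, F' x t) (Pi.single j 1)
        = ∫ t in (0:ℝ)..1, F' x t (Pi.single j 1) := by
      rw [intervalIntegral.integral_of_le zero_le_one,
        intervalIntegral.integral_of_le zero_le_one]
      exact ContinuousLinearMap.integral_apply hint1 _
    rw [happeq]
    have heq : ∀ t ∈ Icc (0:ℝ) 1, F' x t (Pi.single j 1)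
        = f j (γ x t) + (t:ℂ) * fderiv ℂ (f j) (γ x t) (x - x₀) := by
      intro t ht
      have hmemU := hmem x hx t ht
      simp only [hF'def, ContinuousLinearMap.sum_apply, ContinuousLinearMap.add_apply,
        ContinuousLinearMap.smul_apply, ContinuousLinearMap.proj_apply, smul_eq_mul]
      rw [Finset.sum_add_distrib]
      congr 1
      · rw [Finset.sum_eq_single j]
        · simp
        · intro i _ hij
          simp [Pi.single_apply, hij]
        · simp
      · rw [clm_apply_sub, Finset.mul_sum]
        refine Finset.sum_congr rfl fun i _ => ?_
        rw [hcl i j _ hmemU]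
        ring
    have hψ : ∀ t ∈ uIcc (0:ℝ) 1, HasDerivAt (fun s : ℝ => ((s:ℝ):ℂ) * f j (γ x s))
        (F' x t (Pi.single j 1)) t := by
      intro t ht
      rw [Set.uIcc_of_le zero_le_one] at ht
      rw [heq t ht]
      have hs : HasDerivAt (fun s : ℝ => ((s:ℝ):ℂ)) 1 t := by
        exact Complex.ofRealCLM.hasDerivAt
      have hcurve : HasDerivAt (fun s : ℝ => γ x s) (x - x₀) t := by
        have := hs.smul_const (x - x₀)
        have h2 := this.const_add x₀
        rw [one_smul] at h2
        exact h2
      have hfj : HasFDerivAt (f j) (fderiv ℂ (f j) (γ x t)) (γ x t) :=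
        ((hf j).differentiableAt (hopen.mem_nhds (hmem x hx t ht))).hasFDerivAt
      have hcomp : HasDerivAt (fun s : ℝ => f j (γ x s))
          (fderiv ℂ (f j) (γ x t) (x - x₀)) t := by
        have := (hfj.restrictScalars ℝ).comp_hasDerivAt t hcurve
        exact this
      have := hs.mul hcomp
      rw [one_mul] at this
      exact this
    have hFTC := intervalIntegral.integral_eq_sub_of_hasDerivAt hψ hintj
    rw [hFTC]
    have h1 : γ x 1 = x := by
      show x₀ + ((1:ℝ):ℂ) • (x - x₀) = x
      simp
    simp [h1]
  refine ⟨fun x => ∫ t in (0:ℝ)..1, F x t, ?_, ?_⟩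
  · exact fun x hx => ((key x hx).1.differentiableAt).differentiableWithinAt
  · intro j x hx
    rw [(key x hx).1.fderiv]
    exact happly x hx j


/-- On a nonempty convex open set `U ⊆ (Fin n → ℂ)`, given holomorphic functions
`c j k` with `c j k = c k j` and `∂_i c j k = ∂_j c i k` on `U`, there is a holomorphic function
`W` on `U` with `∂_j ∂_k W = c j k` on `U`. -/
theorem stmt_12 {n : ℕ} (U : Set (Fin n → ℂ)) (hne : U.Nonempty)
    (hconv : Convex ℝ U) (hopen : IsOpen U)
    (c : Fin n → Fin n → (Fin n → ℂ) → ℂ)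
    (hdiff : ∀ j k, DifferentiableOn ℂ (c j k) U)
    (hsym : ∀ j k, c j k = c k j)
    (hclosed : ∀ i j k, ∀ x ∈ U,
      fderiv ℂ (c j k) x (Pi.single i 1) = fderiv ℂ (c i k) x (Pi.single j 1)) :
    ∃ W : (Fin n → ℂ) → ℂ, DifferentiableOn ℂ W U ∧
      ∀ j k, ∀ x ∈ U,
        fderiv ℂ (fun y => fderiv ℂ W y (Pi.single k 1)) x (Pi.single j 1) = c j k x := by
  classical
  obtain ⟨x₀, hx₀⟩ := hne
  have h1 : ∀ k, ∃ g, DifferentiableOn ℂ g U ∧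
      ∀ j, ∀ x ∈ U, fderiv ℂ g x (Pi.single j 1) = c j k x := by
    intro k
    exact poincare hconv hopen hx₀ (fun j => c j k) (fun j => hdiff j k)
      (fun i j x hx => hclosed j i k x hx)
  choose g hgdiff hgder using h1
  obtain ⟨W, hWdiff, hWder⟩ := poincare hconv hopen hx₀ g hgdiff
    (fun i j x hx => by rw [hgder i j x hx, hgder j i x hx, hsym j i])
  refine ⟨W, hWdiff, fun j k x hx => ?_⟩
  have hev : (fun y => fderiv ℂ W y (Pi.single k 1)) =ᶠ[nhds x] g k := by
    filter_upwards [hopen.mem_nhds hx] with y hy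
    exact hWder k y hy
  rw [hev.fderiv_eq]
  exact hgder k j x hx
end

section
/- Let Γ = Fin n → ℤ with a ℤ-bilinear skew-symmetric form ⟨·,·⟩, let ℏ be a nonzero real number, and let B : A × A → A be a ℂ-bilinear map on A = AddMonoidAlgebra ℂ Γ satisfying B(x_α, x_β) = ((2/ℏ)·sin(ℏ·⟨α,β⟩/2))·x_{α+β} on the standard basis elements x_γ = single γ 1. Then B satisfies the Jacobi identity: B(B(f,g),h) + B(B(g,h),f) + B(B(h,f),g) = 0 for all f, g, h ∈ A. -/
lemma sin_jac_aux (x y z : ℝ) :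
    Real.sin x * Real.sin (y - z) + Real.sin y * Real.sin (z - x)
      + Real.sin z * Real.sin (x - y) = 0 := by
  simp [Real.sin_sub]; ring

/-- On `A = AddMonoidAlgebra ℂ (Fin n → ℤ)`, a ℂ-bilinear map `B` satisfying
`B(x_α, x_β) = ((2/ℏ)·sin(ℏ·⟨α,β⟩/2))·x_{α+β}` on the standard basis (for a nonzero real `ℏ`
and a ℤ-bilinear skew-symmetric form `⟨·,·⟩`) satisfies the Jacobi identity. -/
theorem stmt_16 {n : ℕ}
    (bform : (Fin n → ℤ) → (Fin n → ℤ) → ℤ)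
    (hadd : ∀ α β γ : Fin n → ℤ, bform (α + β) γ = bform α γ + bform β γ)
    (hskew : ∀ α β : Fin n → ℤ, bform α β = -bform β α)
    (ℏ : ℝ) (hℏ : ℏ ≠ 0)
    (B : AddMonoidAlgebra ℂ (Fin n → ℤ) →ₗ[ℂ] AddMonoidAlgebra ℂ (Fin n → ℤ) →ₗ[ℂ]
      AddMonoidAlgebra ℂ (Fin n → ℤ))
    (hB : ∀ α β : Fin n → ℤ,
      B (AddMonoidAlgebra.single α 1) (AddMonoidAlgebra.single β 1) =
        ((((2 / ℏ) * Real.sin (ℏ * (bform α β : ℝ) / 2) : ℝ) : ℂ)) •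
          AddMonoidAlgebra.single (α + β) (1 : ℂ)) :
    ∀ f g h : AddMonoidAlgebra ℂ (Fin n → ℤ),
      B (B f g) h + B (B g h) f + B (B h f) g = 0 := by
  intro f g h
  induction f using AddMonoidAlgebra.induction_linear with
  | zero => simp
  | add f₁ f₂ ih₁ ih₂ =>
    simp only [map_add, LinearMap.add_apply] at *
    linear_combination ih₁ + ih₂
  | single a x =>
    induction g using AddMonoidAlgebra.induction_linear with
    | zero => simp
    | add g₁ g₂ ih₁ ih₂ =>
      simp only [map_add, LinearMap.add_apply] at *
      linear_combination ih₁ + ih₂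
    | single b y =>
      induction h using AddMonoidAlgebra.induction_linear with
      | zero => simp
      | add h₁ h₂ ih₁ ih₂ =>
        simp only [map_add, LinearMap.add_apply] at *
        linear_combination ih₁ + ih₂
      | single c z =>
        have e : ∀ (a : Fin n → ℤ) (x : ℂ),
            (AddMonoidAlgebra.single a x) = x • AddMonoidAlgebra.single a (1 : ℂ) := by
          intro a x; simp [AddMonoidAlgebra.smul_single']
        have hB' : ∀ α β : Fin n → ℤ,
            B (AddMonoidAlgebra.single α 1) (AddMonoidAlgebra.single β 1) =
              ((((2 / ℏ) * Real.sin (ℏ * (bform α β : ℝ) / 2) : ℝ) : ℂ)) •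
                AddMonoidAlgebra.single (α + β) (1 : ℂ) := hB
        rw [e a x, e b y, e c z]
        simp only [map_smul, LinearMap.smul_apply, hB']
        rw [show b + c + a = a + b + c from by abel, show c + a + b = a + b + c from by abel]
        simp only [smul_smul]
        rw [← add_smul, ← add_smul]
        convert zero_smul ℂ _
        have h1 : bform (a + b) c = bform b c - bform c a := by
          rw [hadd, hskew a c]; ring
        have h2 : bform (b + c) a = bform c a - bform a b := by
          rw [hadd, hskew b a]; ring
        have h3 : bform (c + a) b = bform a b - bform b c := by
          rw [hadd, hskew c b]; ring
        rw [h1, h2, h3]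
        set p : ℤ := bform a b
        set q : ℤ := bform b c
        set r : ℤ := bform c a
        have key : (2 / ℏ * Real.sin (ℏ * (p : ℝ) / 2)) * (2 / ℏ * Real.sin (ℏ * ((q - r : ℤ) : ℝ) / 2))
            + (2 / ℏ * Real.sin (ℏ * (q : ℝ) / 2)) * (2 / ℏ * Real.sin (ℏ * ((r - p : ℤ) : ℝ) / 2))
            + (2 / ℏ * Real.sin (ℏ * (r : ℝ) / 2)) * (2 / ℏ * Real.sin (ℏ * ((p - q : ℤ) : ℝ) / 2)) = 0 := by
          push_cast
          rw [show ℏ * ((q : ℝ) - r) / 2 = ℏ * q / 2 - ℏ * r / 2 from by ring,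
            show ℏ * ((r : ℝ) - p) / 2 = ℏ * r / 2 - ℏ * p / 2 from by ring,
            show ℏ * ((p : ℝ) - q) / 2 = ℏ * p / 2 - ℏ * q / 2 from by ring]
          have := sin_jac_aux (ℏ * p / 2) (ℏ * q / 2) (ℏ * r / 2)
          linear_combination (2 / ℏ) ^ 2 * this
        have keyC : ((2 / ℏ * Real.sin (ℏ * (p : ℝ) / 2) : ℝ) : ℂ) * ((2 / ℏ * Real.sin (ℏ * ((q - r : ℤ) : ℝ) / 2) : ℝ) : ℂ)
            + ((2 / ℏ * Real.sin (ℏ * (q : ℝ) / 2) : ℝ) : ℂ) * ((2 / ℏ * Real.sin (ℏ * ((r - p : ℤ) : ℝ) / 2) : ℝ) : ℂ)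
            + ((2 / ℏ * Real.sin (ℏ * (r : ℝ) / 2) : ℝ) : ℂ) * ((2 / ℏ * Real.sin (ℏ * ((p - q : ℤ) : ℝ) / 2) : ℝ) : ℂ) = 0 := by
          exact_mod_cast congrArg (Complex.ofReal) key
        linear_combination (x * y * z) * keyC
end
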